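/- For every integer n ≥ 0, the sum over all ordered compositions (k_1,...,k_t) of n with each k_i ≥ 2 of the quantity (n! / (k_1! ⋯ k_t!)) · (k_1 - 1)(k_2 - 1)⋯(k_t - 1) equals the number of derangements of n elements. -/

import Mathlib

open Finset

private def Tz (n : ℕ) : ℤ := ∑ k ∈ range (n+1), (n.choose k : ℤ) * numDerangements k
private def Uz (n : ℕ) : ℤ := ∑ k ∈ range (n+1), (n.choose k : ℤ) * numDerangements (k+1)

private lemma Tz_succ (n : ℕ) : Tz (n+1) = Tz n + Uz n := by
  have h1 : Tz (n+1) = ∑ k ∈ range (n+1), ((n+1).choose (k+1) : ℤ) * numDerangements (k+1)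
      + (numDerangements 0 : ℤ) := by
    rw [Tz, Finset.sum_range_succ']; simp
  have h2 : ∀ k, ((n+1).choose (k+1) : ℤ) = (n.choose k : ℤ) + (n.choose (k+1) : ℤ) := by
    intro k
    have := Nat.choose_succ_succ n k
    push_cast [this]; ring
  have h3 : Tz n = ∑ k ∈ range (n+1), (n.choose (k+1) : ℤ) * numDerangements (k+1)
      + (numDerangements 0 : ℤ) := by
    rw [Tz]
    have := Finset.sum_range_succ (fun k => (n.choose k : ℤ) * numDerangements k) (n+1)
    rw [Finset.sum_range_succ']
    simp only [Nat.choose_zero_right, Nat.cast_one, one_mul, add_left_inj]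
    rw [Finset.sum_range_succ, Nat.choose_succ_self]
    simp
  rw [h1, Uz]
  have : ∑ k ∈ range (n+1), ((n+1).choose (k+1) : ℤ) * numDerangements (k+1)
      = ∑ k ∈ range (n+1), ((n.choose k : ℤ) * numDerangements (k+1)
        + (n.choose (k+1) : ℤ) * numDerangements (k+1)) := by
    refine Finset.sum_congr rfl fun k _ => ?_
    rw [h2]; ring
  rw [this, Finset.sum_add_distrib, h3]; ring

private lemma Uz_succ (n : ℕ) : Uz (n+1) = (n+1) * Uz n + Tz (n+1) := by
  have hD : ∀ k : ℕ, (numDerangements (k+1) : ℤ) = (k+1) * numDerangements k - (-1)^k :=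
    numDerangements_succ
  have h1 : Uz (n+1) = ∑ k ∈ range (n+2), (((n+1).choose k : ℤ) * ((k:ℤ) * numDerangements k)
      + ((n+1).choose k : ℤ) * numDerangements k - (-1)^k * ((n+1).choose k : ℤ)) := by
    rw [Uz]
    refine Finset.sum_congr rfl fun k _ => ?_
    rw [hD k]; ring
  rw [h1, Finset.sum_sub_distrib, Finset.sum_add_distrib]
  have halt : ∑ k ∈ range (n+2), (-1:ℤ)^k * ((n+1).choose k : ℤ) = 0 :=
    Int.alternating_sum_range_choose_of_ne (Nat.succ_ne_zero n)
  have hk : ∑ k ∈ range (n+2), ((n+1).choose k : ℤ) * ((k:ℤ) * numDerangements k)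
      = (n+1) * Uz n := by
    rw [Finset.sum_range_succ']
    simp only [Nat.cast_zero, zero_mul, mul_zero, add_zero]
    rw [Uz, Finset.mul_sum]
    refine Finset.sum_congr rfl fun k _ => ?_
    have h := Nat.add_one_mul_choose_eq n k
    have h' : ((n+1) * n.choose k : ℤ) = ((n+1).choose (k+1) : ℤ) * (k+1) := by
      exact_mod_cast congrArg (Nat.cast : ℕ → ℤ) h
    push_cast
    nlinarith [h']
  rw [hk, halt, ← Tz]
  ring

private lemma Tz_eq (n : ℕ) : Tz n = n.factorial ∧ Uz n = n * n.factorial := by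
  induction n with
  | zero =>
    constructor
    · simp [Tz]
    · simp [Uz, numDerangements_one]
  | succ n ih =>
    have hT : Tz (n+1) = (n+1).factorial := by
      rw [Tz_succ, ih.1, ih.2, Nat.factorial_succ]; push_cast; ring
    refine ⟨hT, ?_⟩
    rw [Uz_succ, ih.2, hT, Nat.factorial_succ]
    push_cast; ring

private lemma Trefl (n : ℕ) :
    ∑ k ∈ range (n+1), (n.choose k : ℤ) * numDerangements (n - k) = n.factorial := by
  have h := Finset.sum_range_reflect (fun j => (n.choose j : ℤ) * numDerangements (n - j)) (n+1)
  rw [← h]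
  have : ∑ j ∈ range (n+1), (n.choose (n + 1 - 1 - j) : ℤ) * numDerangements (n - (n + 1 - 1 - j))
      = ∑ j ∈ range (n+1), (n.choose j : ℤ) * numDerangements j := by
    refine Finset.sum_congr rfl fun j hj => ?_
    have hj' : j ≤ n := by simpa [Nat.lt_succ_iff] using hj
    have e1 : n + 1 - 1 - j = n - j := by omega
    have e2 : n - (n - j) = j := by omega
    rw [e1, e2, Nat.choose_symm hj']
  rw [this, ← Tz, (Tz_eq n).1]

private lemma L3z (n : ℕ) (hn : 1 ≤ n) :
    (numDerangements n : ℤ)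
      = ∑ k ∈ Ico 2 (n+1), (n.choose k : ℤ) * ((k:ℤ) - 1) * numDerangements (n - k) := by
  have hsplit : range (n+1) = insert 0 (insert 1 (Ico 2 (n+1))) := by
    ext x; simp only [mem_range, mem_insert, mem_Ico]; omega
  have hSc : (n.factorial : ℤ) = (numDerangements n : ℤ) + n * numDerangements (n-1)
      + ∑ k ∈ Ico 2 (n+1), (n.choose k : ℤ) * numDerangements (n - k) := by
    rw [← Trefl n, hsplit, Finset.sum_insert (by simp), Finset.sum_insert (by simp)]
    simp [Nat.choose_one_right]
    ring
  -- the k * C(n,k) sum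
  have hA : ∑ k ∈ Ico 2 (n+1), (n.choose k : ℤ) * (k:ℤ) * numDerangements (n - k)
      = n * ((n-1).factorial : ℤ) - n * numDerangements (n-1) := by
    have step1 : ∑ k ∈ Ico 2 (n+1), (n.choose k : ℤ) * (k:ℤ) * numDerangements (n - k)
        = n * ∑ k ∈ Ico 2 (n+1), ((n-1).choose (k-1) : ℤ) * numDerangements (n - k) := by
      rw [Finset.mul_sum]
      refine Finset.sum_congr rfl fun k hk => ?_
      have hk2 : 2 ≤ k := (Finset.mem_Ico.mp hk).1
      have h := Nat.add_one_mul_choose_eq (n-1) (k-1)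
      have e1 : (n-1) + 1 = n := by omega
      have e2 : (k-1) + 1 = k := by omega
      rw [e1, e2] at h
      have h' : ((n : ℤ)) * ((n-1).choose (k-1) : ℤ) = (n.choose k : ℤ) * (k:ℤ) := by
        exact_mod_cast congrArg (Nat.cast : ℕ → ℤ) h
      rw [mul_assoc, ← mul_assoc ((n:ℤ)), h']; ring
    have step2 : ∑ k ∈ Ico 2 (n+1), ((n-1).choose (k-1) : ℤ) * numDerangements (n - k)
        = ∑ j ∈ Ico 1 n, ((n-1).choose j : ℤ) * numDerangements (n - 1 - j) := by
      rw [Finset.sum_Ico_eq_sum_range, Finset.sum_Ico_eq_sum_range]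
      have e : n + 1 - 2 = n - 1 := by omega
      rw [e]
      refine Finset.sum_congr rfl fun i _ => ?_
      have e1 : 2 + i - 1 = 1 + i := by omega
      have e2 : n - (2 + i) = n - 1 - (1 + i) := by omega
      rw [e1, e2]
    have step3 : ∑ j ∈ Ico 1 n, ((n-1).choose j : ℤ) * numDerangements (n - 1 - j)
        = ((n-1).factorial : ℤ) - numDerangements (n-1) := by
      have hsplit2 : range ((n-1)+1) = insert 0 (Ico 1 n) := by
        ext x; simp only [mem_range, mem_insert, mem_Ico]; omega
      have := Trefl (n-1)
      rw [hsplit2, Finset.sum_insert (by simp)] at this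
      simp only [Nat.choose_zero_right, Nat.cast_one, one_mul, Nat.sub_zero] at this
      linarith
    rw [step1, step2, step3]; ring
  have key : ∑ k ∈ Ico 2 (n+1), (n.choose k : ℤ) * ((k:ℤ) - 1) * numDerangements (n - k)
      = ∑ k ∈ Ico 2 (n+1), (n.choose k : ℤ) * (k:ℤ) * numDerangements (n - k)
        - ∑ k ∈ Ico 2 (n+1), (n.choose k : ℤ) * numDerangements (n - k) := by
    rw [← Finset.sum_sub_distrib]
    refine Finset.sum_congr rfl fun k _ => ?_; ring
  have hfac : (n:ℤ) * ((n-1).factorial : ℤ) = (n.factorial : ℤ) := by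
    exact_mod_cast congrArg (Nat.cast : ℕ → ℤ) (Nat.mul_factorial_pred (Nat.one_le_iff_ne_zero.mp hn))
  rw [key, hA]
  linarith [hSc]

private lemma L3n (n : ℕ) (hn : 1 ≤ n) :
    numDerangements n
      = ∑ k ∈ Ico 2 (n+1), n.choose k * (k - 1) * numDerangements (n - k) := by
  have := L3z n hn
  have hcast : ((∑ k ∈ Ico 2 (n+1), n.choose k * (k - 1) * numDerangements (n - k) : ℕ) : ℤ)
      = ∑ k ∈ Ico 2 (n+1), (n.choose k : ℤ) * ((k:ℤ) - 1) * numDerangements (n - k) := by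
    push_cast
    refine Finset.sum_congr rfl fun k hk => ?_
    have hk2 : 2 ≤ k := (Finset.mem_Ico.mp hk).1
    have : ((k - 1 : ℕ) : ℤ) = (k : ℤ) - 1 := by omega
    rw [this]
  exact_mod_cast this.trans hcast.symm

private lemma prod_fact_dvd (l : List ℕ) : (l.map Nat.factorial).prod ∣ l.sum.factorial := by
  induction l with
  | nil => simp
  | cons k t ih =>
    simp only [List.map_cons, List.prod_cons, List.sum_cons]
    calc Nat.factorial k * (t.map Nat.factorial).prod
        ∣ Nat.factorial k * t.sum.factorial := mul_dvd_mul_left _ ih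
      _ ∣ (k + t.sum).factorial := Nat.factorial_mul_factorial_dvd_factorial_add k t.sum

private lemma div_split (k m M : ℕ) (h : M ∣ m.factorial) :
    (k + m).factorial / (k.factorial * M) = (k + m).choose k * (m.factorial / M) := by
  obtain ⟨q, hq⟩ := h
  have hM : 0 < M := Nat.pos_of_dvd_of_pos ⟨q, hq⟩ m.factorial_pos
  have h1 : (k + m).factorial = (k.factorial * M) * ((k + m).choose k * q) := by
    rw [← Nat.add_choose_mul_factorial_mul_factorial k m, hq, Nat.choose_symm_add]
    ring
  rw [h1, hq, Nat.mul_div_cancel_left _ hM,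
    Nat.mul_div_cancel_left _ (Nat.mul_pos k.factorial_pos hM)]

private def compSum (n : ℕ) : ℕ :=
  ∑ c ∈ Finset.univ.filter (fun c : Composition n => ∀ k ∈ c.blocks, 2 ≤ k),
    (Nat.factorial n / (c.blocks.map Nat.factorial).prod) *
      (c.blocks.map (fun k => k - 1)).prod

private lemma compSum_zero : compSum 0 = 1 := by
  have huniv : (Finset.univ.filter (fun c : Composition 0 => ∀ k ∈ c.blocks, 2 ≤ k))
      = {⟨[], by simp, by simp⟩} := by
    ext c
    simp only [Finset.mem_filter, Finset.mem_univ, true_and, Finset.mem_singleton]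
    constructor
    · intro _
      apply Composition.ext
      have hsum := c.blocks_sum
      cases hb : c.blocks with
      | nil => rfl
      | cons a t =>
        exfalso
        have ha : 0 < a := c.blocks_pos (by rw [hb]; exact List.mem_cons_self)
        rw [hb, List.sum_cons] at hsum
        omega
    · intro h k hk
      rw [h] at hk
      simp at hk
  rw [compSum, huniv]
  simp [Nat.factorial]

private lemma compSum_succ (n : ℕ) :
    compSum (n+1) = ∑ k ∈ Ico 2 (n+2), (n+1).choose k * (k - 1) * compSum (n+1-k) := by
  have hrhs : ∑ k ∈ Ico 2 (n+2), (n+1).choose k * (k - 1) * compSum (n+1-k)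
      = ∑ p ∈ (Ico 2 (n+2)).sigma
          (fun k => Finset.univ.filter (fun c : Composition (n+1-k) => ∀ j ∈ c.blocks, 2 ≤ j)),
          (n+1).choose p.1 * (p.1 - 1) *
            ((Nat.factorial (n+1-p.1) / (p.2.blocks.map Nat.factorial).prod) *
              (p.2.blocks.map (fun k => k - 1)).prod) := by
    rw [Finset.sum_sigma]
    refine Finset.sum_congr rfl fun k _ => ?_
    rw [compSum, Finset.mul_sum]
  rw [hrhs, compSum]
  refine Finset.sum_bij'
    (i := fun c _ => (⟨c.blocks.headI,
      ⟨c.blocks.tail, fun hi => c.blocks_pos (List.mem_of_mem_tail hi),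
        by rw [List.tail_sum, c.blocks_sum]⟩⟩ :
      Σ k : ℕ, Composition (n+1-k)))
    (j := fun p hp => ⟨p.1 :: p.2.blocks, ?_, ?_⟩) ?_ ?_ ?_ ?_ ?_
  · -- positivity for j
    intro i hi
    rcases List.mem_cons.mp hi with h | h
    · subst h
      have := (Finset.mem_sigma.mp hp).1
      have := (Finset.mem_Ico.mp this).1
      omega
    · exact p.2.blocks_pos h
  · -- sum for j
    have hk := (Finset.mem_Ico.mp (Finset.mem_sigma.mp hp).1)
    rw [List.sum_cons, p.2.blocks_sum]
    omega
  · -- hi : i c ∈ sigma set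
    intro c hc
    have hc' := (Finset.mem_filter.mp hc).2
    have hne : c.blocks ≠ [] := by
      intro h
      have := c.blocks_sum
      rw [h] at this
      simp at this
    have hmem : c.blocks.headI ∈ c.blocks := by
      cases hb : c.blocks with
      | nil => exact absurd hb hne
      | cons a t => simp
    refine Finset.mem_sigma.mpr ⟨Finset.mem_Ico.mpr ⟨hc' _ hmem, ?_⟩, ?_⟩
    · show c.blocks.headI < n + 2
      have := List.headI_le_sum c.blocks
      rw [c.blocks_sum] at this
      omega
    · refine Finset.mem_filter.mpr ⟨Finset.mem_univ _, ?_⟩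
      intro j hj
      exact hc' _ (List.mem_of_mem_tail hj)
  · -- hj : j p ∈ filter
    intro p hp
    refine Finset.mem_filter.mpr ⟨Finset.mem_univ _, ?_⟩
    intro j hj
    rcases List.mem_cons.mp hj with h | h
    · subst h
      exact (Finset.mem_Ico.mp (Finset.mem_sigma.mp hp).1).1
    · exact (Finset.mem_filter.mp (Finset.mem_sigma.mp hp).2).2 _ h
  · -- left inverse
    intro c hc
    apply Composition.ext
    simp only
    have hne : c.blocks ≠ [] := by
      intro h
      have := c.blocks_sum
      rw [h] at this
      simp at this
    cases hb : c.blocks with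
    | nil => exact absurd hb hne
    | cons a t => simp [hb]
  · -- right inverse
    intro p hp
    rfl
  · -- values
    intro c hc
    have hc' := (Finset.mem_filter.mp hc).2
    have hne : c.blocks ≠ [] := by
      intro h
      have := c.blocks_sum
      rw [h] at this
      simp at this
    obtain ⟨a, t, hb⟩ : ∃ a t, c.blocks = a :: t := by
      cases hb : c.blocks with
      | nil => exact absurd hb hne
      | cons a t => exact ⟨a, t, rfl⟩
    have hsum : a + t.sum = n + 1 := by
      have := c.blocks_sum
      rw [hb, List.sum_cons] at this
      exact this
    have ha2 : 2 ≤ a := hc' a (by rw [hb]; exact List.mem_cons_self)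
    simp only [hb, List.headI_cons, List.tail_cons, List.map_cons, List.prod_cons]
    have hts : t.sum = n + 1 - a := by omega
    have hdvd : (t.map Nat.factorial).prod ∣ (n+1-a).factorial := by
      rw [← hts]
      exact prod_fact_dvd t
    have hkey : (n+1).factorial / (a.factorial * (t.map Nat.factorial).prod)
        = (n+1).choose a * ((n+1-a).factorial / (t.map Nat.factorial).prod) := by
      have := div_split a (n+1-a) ((t.map Nat.factorial).prod) hdvd
      have he : a + (n+1-a) = n+1 := by omega
      rw [he] at this
      exact this
    rw [hkey]
    ring

private lemma compSum_eq (n : ℕ) : compSum n = numDerangements n := by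
  induction n using Nat.strong_induction_on with
  | _ n ih =>
    match n with
    | 0 => rw [compSum_zero, numDerangements_zero]
    | (m+1) =>
      rw [compSum_succ, L3n (m+1) (Nat.succ_le_succ (Nat.zero_le m))]
      refine Finset.sum_congr rfl fun k hk => ?_
      have hk2 := (Finset.mem_Ico.mp hk).1
      rw [ih (m+1-k) (by omega)]

theorem composition_sum_eq_card_derangements (n : ℕ) :
    ∑ c ∈ Finset.univ.filter (fun c : Composition n => ∀ k ∈ c.blocks, 2 ≤ k),
      (Nat.factorial n / (c.blocks.map Nat.factorial).prod) *
        (c.blocks.map (fun k => k - 1)).prod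
      = Nat.card (derangements (Fin n)) := by
  rw [Nat.card_eq_fintype_card, card_derangements_fin_eq_numDerangements, ← compSum_eq]
  rfl
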